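/- Let (S̄, Q̄) ∈ Sym(n) × O(n) with Φ(S̄,Q̄) = S̄⊙S̄ − Q̄ΛQ̄ᵀ. Then DΦ(S̄,Q̄) is surjective if and only if the only symmetric matrix ΔZ satisfying both S̄ ⊙ ΔZ = 0 and Q̄ΛQ̄ᵀ ΔZ − ΔZ Q̄ΛQ̄ᵀ = 0 is ΔZ = 0. In particular, if every entry of S̄ is nonzero, then DΦ(S̄,Q̄) is surjective. -/

import Mathlib

open Matrix

noncomputable section Aux19

variable {n : ℕ}

/-- Embedding of matrices into Euclidean space. -/
def emb19 (n : ℕ) (M : Matrix (Fin n) (Fin n) ℝ) : EuclideanSpace ℝ (Fin n × Fin n) :=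
  (WithLp.equiv 2 ((Fin n × Fin n) → ℝ)).symm (fun p => M p.1 p.2)

lemma emb19_add (M N : Matrix (Fin n) (Fin n) ℝ) :
    emb19 n (M + N) = emb19 n M + emb19 n N := rfl

lemma emb19_sub (M N : Matrix (Fin n) (Fin n) ℝ) :
    emb19 n (M - N) = emb19 n M - emb19 n N := rfl

lemma emb19_smul (c : ℝ) (M : Matrix (Fin n) (Fin n) ℝ) :
    emb19 n (c • M) = c • emb19 n M := rfl

lemma emb19_zero : emb19 n (0 : Matrix (Fin n) (Fin n) ℝ) = 0 := rfl

lemma inner19 (M N : Matrix (Fin n) (Fin n) ℝ) :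
    (inner ℝ (emb19 n M) (emb19 n N) : ℝ) = ∑ i, ∑ j, M i j * N i j := by
  simp only [emb19, PiLp.inner_apply, RCLike.inner_apply, conj_trivial, Fintype.sum_prod_type]
  exact Finset.sum_congr rfl fun i _ => Finset.sum_congr rfl fun j _ => mul_comm _ _

lemma trace19 (M N : Matrix (Fin n) (Fin n) ℝ) :
    Matrix.trace (M * Nᵀ) = ∑ i, ∑ j, M i j * N i j := by
  simp [Matrix.trace, Matrix.mul_apply, Matrix.diag]

lemma sumsq19 (f : Fin n → Fin n → ℝ) (h : ∑ i, ∑ j, f i j * f i j = 0) :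
    ∀ i j, f i j = 0 := by
  have h' : ∑ p : Fin n × Fin n, f p.1 p.2 * f p.1 p.2 = 0 := by
    rw [Fintype.sum_prod_type]; exact h
  intro i j
  have := (Finset.sum_eq_zero_iff_of_nonneg (fun q _ => mul_self_nonneg (f q.1 q.2))).mp h'
    (i, j) (Finset.mem_univ _)
  exact mul_self_eq_zero.mp this

lemma hadamard_isSymm19 {S T : Matrix (Fin n) (Fin n) ℝ} (hS : S.IsSymm) (hT : T.IsSymm) :
    (S.hadamard T).IsSymm := by
  ext i j
  simp [Matrix.transpose_apply, Matrix.hadamard_apply, hS.apply, hT.apply]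

/-- The range of the differential, as a submodule. -/
def W19 (n : ℕ) (S Q A : Matrix (Fin n) (Fin n) ℝ) :
    Submodule ℝ (EuclideanSpace ℝ (Fin n × Fin n)) where
  carrier := {z | ∃ ΔS Ω : Matrix (Fin n) (Fin n) ℝ, ΔS.IsSymm ∧ Ωᵀ = -Ω ∧
    z = emb19 n ((2 : ℝ) • S.hadamard ΔS
      + (A * ((Q * Ω) * Qᵀ) - ((Q * Ω) * Qᵀ) * A))}
  zero_mem' := ⟨0, 0, Matrix.isSymm_zero, by simp, by
    simp [Matrix.hadamard_zero, emb19_zero]⟩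
  add_mem' := by
    rintro a b ⟨S1, O1, h1, h1', rfl⟩ ⟨S2, O2, h2, h2', rfl⟩
    refine ⟨S1 + S2, O1 + O2, h1.add h2, by rw [Matrix.transpose_add, h1', h2']; abel, ?_⟩
    rw [← emb19_add]
    simp only [Matrix.hadamard_add, smul_add, Matrix.mul_add, Matrix.add_mul]
    abel
  smul_mem' := by
    rintro c z ⟨S1, O1, h1, h1', rfl⟩
    refine ⟨c • S1, c • O1, h1.smul c, by rw [Matrix.transpose_smul, h1', smul_neg], ?_⟩
    rw [← emb19_smul]
    simp only [Matrix.hadamard_smul, Matrix.mul_smul, Matrix.smul_mul, smul_sub, smul_add,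
      smul_comm c (2 : ℝ)]

end Aux19

theorem stmt_19 (n : ℕ) (Lam : Fin n → ℝ)
    (S Q : Matrix (Fin n) (Fin n) ℝ) (hS : S.IsSymm) (hQ : Qᵀ * Q = 1) :
    let A := Q * Matrix.diagonal Lam * Qᵀ
    -- surjectivity of DΦ(S,Q) onto the symmetric matrices
    let Surj : Prop := ∀ ΔZ : Matrix (Fin n) (Fin n) ℝ, ΔZ.IsSymm →
      ∃ ΔS Ω : Matrix (Fin n) (Fin n) ℝ, ΔS.IsSymm ∧ Ωᵀ = -Ω ∧
        (2 : ℝ) • S.hadamard ΔS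
          + (A * ((Q * Ω) * Qᵀ) - ((Q * Ω) * Qᵀ) * A) = ΔZ
    (Surj ↔ ∀ ΔZ : Matrix (Fin n) (Fin n) ℝ, ΔZ.IsSymm →
        S.hadamard ΔZ = 0 → A * ΔZ - ΔZ * A = 0 → ΔZ = 0) ∧
    ((∀ i j, S i j ≠ 0) → Surj) := by
  intro A Surj
  have hAT : Aᵀ = A := by
    show (Q * Matrix.diagonal Lam * Qᵀ)ᵀ = _
    rw [Matrix.transpose_mul, Matrix.transpose_mul, Matrix.transpose_transpose,
      Matrix.diagonal_transpose]
    exact (Matrix.mul_assoc _ _ _).symm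
  have hQQ : Q * Qᵀ = 1 := mul_eq_one_comm.mp hQ
  have hSurj2 : (∀ i j, S i j ≠ 0) → Surj := by
    intro hne ΔZ hZ
    refine ⟨Matrix.of fun i j => ΔZ i j / (2 * S i j), 0, ?_, by simp, ?_⟩
    · ext i j
      simp only [Matrix.transpose_apply, Matrix.of_apply]
      rw [hS.apply, hZ.apply]
    · ext i j
      simp only [Matrix.mul_zero, Matrix.zero_mul, sub_zero, Matrix.add_apply,
        Matrix.smul_apply, Matrix.hadamard_apply, Matrix.of_apply, smul_eq_mul,
        Matrix.zero_apply, add_zero]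
      field_simp [hne i j]
  refine ⟨⟨?_, ?_⟩, hSurj2⟩
  · -- Surj → kernel trivial
    intro h ΔZ hZsym hHad hComm
    obtain ⟨ΔS, Ω, hΔS, hΩ, heq⟩ := h ΔZ hZsym
    have hA : A * ΔZ = ΔZ * A := sub_eq_zero.mp hComm
    set W' := (Q * Ω) * Qᵀ with hW'
    have e1 : Matrix.trace (((2 : ℝ) • S.hadamard ΔS) * ΔZᵀ) = 0 := by
      rw [Matrix.smul_mul, Matrix.trace_smul, trace19]
      have : ∀ i : Fin n, ∑ j, (S.hadamard ΔS) i j * ΔZ i j = 0 := by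
        intro i
        refine Finset.sum_eq_zero fun j _ => ?_
        have h0 : S i j * ΔZ i j = 0 := by
          have := congrFun (congrFun hHad i) j
          simpa [Matrix.hadamard_apply] using this
        simp only [Matrix.hadamard_apply]
        rw [mul_comm (S i j) (ΔS i j), mul_assoc, h0, mul_zero]
      rw [Finset.sum_eq_zero fun i _ => this i, smul_zero]
    have e2 : Matrix.trace ((A * W' - W' * A) * ΔZᵀ) = 0 := by
      rw [hZsym.eq, Matrix.sub_mul, Matrix.trace_sub,
        Matrix.mul_assoc A W' ΔZ, Matrix.trace_mul_comm A (W' * ΔZ),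
        Matrix.mul_assoc W' ΔZ A, ← hA, Matrix.mul_assoc W' A ΔZ, sub_self]
    have key : Matrix.trace (((2 : ℝ) • S.hadamard ΔS + (A * W' - W' * A)) * ΔZᵀ) = 0 := by
      rw [Matrix.add_mul, Matrix.trace_add, e1, e2, add_zero]
    rw [heq, trace19] at key
    ext i j
    exact sumsq19 (fun i j => ΔZ i j) key i j
  · -- kernel trivial → Surj
    intro hker ΔZ hZsym
    obtain ⟨y, hy, w, hw, hv⟩ :=
      (W19 n S Q A).exists_add_mem_mem_orthogonal (emb19 n ΔZ)
    obtain ⟨ΔS0, Ω0, hS0, hΩ0, rfl⟩ := hy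
    set M0 := (2 : ℝ) • S.hadamard ΔS0
      + (A * ((Q * Ω0) * Qᵀ) - ((Q * Ω0) * Qᵀ) * A) with hM0def
    have hM0 : M0.IsSymm := by
      have hWs : ((Q * Ω0) * Qᵀ)ᵀ = -((Q * Ω0) * Qᵀ) := by
        rw [Matrix.transpose_mul, Matrix.transpose_mul, Matrix.transpose_transpose, hΩ0]
        simp [Matrix.mul_assoc]
      show M0ᵀ = M0
      rw [hM0def, Matrix.transpose_add, Matrix.transpose_smul,
        (hadamard_isSymm19 hS hS0).eq, Matrix.transpose_sub,
        Matrix.transpose_mul A ((Q * Ω0) * Qᵀ), Matrix.transpose_mul ((Q * Ω0) * Qᵀ) A,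
        hAT, hWs]
      simp only [Matrix.neg_mul, Matrix.mul_neg, sub_neg_eq_add]
      abel
    set N := ΔZ - M0 with hNdef
    have hwN : w = emb19 n N := by
      rw [hNdef, emb19_sub]
      rw [hv]
      abel
    have hN : N.IsSymm := by
      show Nᵀ = N
      rw [hNdef, Matrix.transpose_sub, hZsym.eq, hM0.eq]
    have test : ∀ (ΔS Ω : Matrix (Fin n) (Fin n) ℝ), ΔS.IsSymm → Ωᵀ = -Ω →
        (inner ℝ (emb19 n ((2 : ℝ) • S.hadamard ΔS
          + (A * ((Q * Ω) * Qᵀ) - ((Q * Ω) * Qᵀ) * A))) (emb19 n N) : ℝ) = 0 := by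
      intro ΔS Ω h1 h2
      rw [← hwN]
      exact (Submodule.mem_orthogonal _ w).mp hw _ ⟨ΔS, Ω, h1, h2, rfl⟩
    -- first kernel condition
    have had0 : S.hadamard N = 0 := by
      have t1 := test (S.hadamard N) 0 (hadamard_isSymm19 hS hN) (by simp)
      rw [show (2 : ℝ) • S.hadamard (S.hadamard N)
          + (A * ((Q * 0) * Qᵀ) - ((Q * 0) * Qᵀ) * A)
          = (2 : ℝ) • S.hadamard (S.hadamard N) by simp] at t1
      rw [inner19] at t1
      have t1' : ∑ i, ∑ j, (S i j * N i j) * (S i j * N i j) = 0 := by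
        have h2 : (2 : ℝ) * ∑ i, ∑ j, (S i j * N i j) * (S i j * N i j) = 0 := by
          rw [← t1]
          rw [Finset.mul_sum]
          refine Finset.sum_congr rfl fun i _ => ?_
          rw [Finset.mul_sum]
          refine Finset.sum_congr rfl fun j _ => ?_
          simp only [Matrix.smul_apply, Matrix.hadamard_apply, smul_eq_mul]
          ring
        linarith
      ext i j
      have := sumsq19 (fun i j => S i j * N i j) t1' i j
      simpa [Matrix.hadamard_apply] using this
    -- second kernel condition
    have comm0 : A * N - N * A = 0 := by
      set K := A * N - N * A with hKdef
      have hKT : Kᵀ = -K := by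
        rw [hKdef, Matrix.transpose_sub, Matrix.transpose_mul A N, Matrix.transpose_mul N A,
          hAT, hN.eq, neg_sub]
      have hΩs : (Qᵀ * K * Q)ᵀ = -(Qᵀ * K * Q) := by
        rw [Matrix.transpose_mul, Matrix.transpose_mul, Matrix.transpose_transpose, hKT]
        simp [Matrix.mul_assoc]
      have hWK : (Q * (Qᵀ * K * Q)) * Qᵀ = K := by
        simp only [← Matrix.mul_assoc]
        rw [hQQ, Matrix.one_mul, Matrix.mul_assoc, hQQ, Matrix.mul_one]
      have t2 := test 0 (Qᵀ * K * Q) Matrix.isSymm_zero hΩs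
      rw [hWK] at t2
      rw [show (2 : ℝ) • S.hadamard 0 + (A * K - K * A) = A * K - K * A by simp] at t2
      rw [inner19] at t2
      -- convert to trace
      have tr2 : Matrix.trace ((A * K - K * A) * Nᵀ) = 0 := by rw [trace19]; exact t2
      rw [hN.eq] at tr2
      have hNA : N * A - A * N = -K := by rw [hKdef]; abel
      have trKK : Matrix.trace (K * Kᵀ) = 0 := by
        calc Matrix.trace (K * Kᵀ) = Matrix.trace (K * -K) := by rw [hKT]
          _ = Matrix.trace (K * (N * A - A * N)) := by rw [hNA]
          _ = Matrix.trace (K * (N * A)) - Matrix.trace (K * (A * N)) := by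
              rw [Matrix.mul_sub, Matrix.trace_sub]
          _ = Matrix.trace (A * K * N) - Matrix.trace (K * A * N) := by
              rw [← Matrix.mul_assoc K N A, Matrix.trace_mul_comm (K * N) A,
                ← Matrix.mul_assoc A K N, ← Matrix.mul_assoc K A N]
          _ = Matrix.trace ((A * K - K * A) * N) := by
              rw [Matrix.sub_mul (A * K) (K * A) N, Matrix.trace_sub]
          _ = 0 := tr2
      rw [trace19] at trKK
      ext i j
      exact sumsq19 (fun i j => K i j) trKK i j
    have hN0 : N = 0 := hker N hN had0 comm0
    have : ΔZ = M0 := by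
      have := hNdef ▸ hN0
      exact (sub_eq_zero.mp this)
    exact ⟨ΔS0, Ω0, hS0, hΩ0, this.symm⟩
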